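/- For every integer d ≥ 12, the integer d(d-11)/2 + 20, which equals g_{d-4}(d) - 1 where g_s(d) = C(s-1,2) + C(d-s,2), is a gap in R_d. -/

import Mathlib

/-- The Macaulay bound `a^⟨t⟩`: if `a = C(k_t,t) + C(k_{t-1},t-1) + ⋯ + C(k_j,j)` is the
binomial expansion of `a` in base `t`, then `a^⟨t⟩ = C(k_t+1,t+1) + ⋯ + C(k_j+1,j+1)`.
Computed greedily; `mac t a = a^⟨t⟩` for `t ≥ 1`. -/
def mac : ℕ → ℕ → ℕ
  | 0, _ => 0
  | t+1, a =>
    if a = 0 then 0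
    else
      Nat.choose (Nat.findGreatest (fun n => Nat.choose n (t+1) ≤ a) (a + t + 1) + 1) (t+2) +
        mac t (a - Nat.choose (Nat.findGreatest (fun n => Nat.choose n (t+1) ≤ a) (a + t + 1)) (t+1))

/-- `h : ℕ → ℕ` is a finite O-sequence of length `s`: `h 0 = 1`, the entries `h 0, …, h (s-1)`
are positive, entries from index `s` on are zero, and `h (t+1) ≤ (h t)^⟨t⟩` for all `t ≥ 1`. -/
def IsOSeq (h : ℕ → ℕ) (s : ℕ) : Prop :=
  h 0 = 1 ∧ (∀ i, 0 < h i ↔ i < s) ∧ ∀ t, 1 ≤ t → h (t + 1) ≤ mac t (h t)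

/-- The multiplicity `e(h) = h_0 + ⋯ + h_{s-1}` of a finite O-sequence of length `s`. -/
def mult (h : ℕ → ℕ) (s : ℕ) : ℕ := ∑ i ∈ Finset.range s, h i

/-- The genus `g(h) = Σ_{j=2}^{s-1} (j-1)·h_j` of a finite O-sequence of length `s`. -/
def genus (h : ℕ → ℕ) (s : ℕ) : ℕ := ∑ j ∈ Finset.range s, (j - 1) * h j

/-- The sequence obtained from `h` by increasing the `i`-th entry by `1`, i.e. `h + e_i`. -/
def addE (h : ℕ → ℕ) (i : ℕ) : ℕ → ℕ := fun j => if j = i then h j + 1 else h j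

/-- The sequence obtained from `h` by decreasing the `i`-th entry by `1`, i.e. `h - e_i`. -/
def subE (h : ℕ → ℕ) (i : ℕ) : ℕ → ℕ := fun j => if j = i then h j - 1 else h j

/-- The total order on finite O-sequences of the same length: `oLT h k` iff `h_ℓ < k_ℓ`
where `ℓ = max{ j : h_j ≠ k_j }`. -/
def oLT (h k : ℕ → ℕ) : Prop := ∃ ℓ, h ℓ < k ℓ ∧ ∀ j, ℓ < j → h j = k j

/-- The set of genera of finite O-sequences of multiplicity `d` and length `s`. -/
def genusSet (d s : ℕ) : Set ℕ := {g | ∃ h, IsOSeq h s ∧ mult h s = d ∧ genus h s = g}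

/-- `G_d`: the set of genera of finite O-sequences of multiplicity `d` (of any length). -/
def GSet (d : ℕ) : Set ℕ := {g | ∃ h s, IsOSeq h s ∧ mult h s = d ∧ genus h s = g}

/-- `g` is a gap in `R_d = [0, C(d-1,2)]`: it lies in the range but is not the genus of any
finite O-sequence of multiplicity `d`. -/
def IsGap (d g : ℕ) : Prop :=
  g ≤ Nat.choose (d - 1) 2 ∧ ∀ h s, IsOSeq h s → mult h s = d → genus h s ≠ g

/-- The O-sequence `(1, d-s+1, 1^{s-2})`, minimal in `𝒢_d^s`. -/
def minSeq (d s : ℕ) : ℕ → ℕ :=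
  fun j => if j = 0 then 1 else if j = 1 then d - s + 1 else if j < s then 1 else 0

/-- The O-sequence `(1, 2^{d-s}, 1^{2s-d-1})`, maximal in `𝒢_d^s`. -/
def maxSeq (d s : ℕ) : ℕ → ℕ :=
  fun j => if j = 0 then 1 else if j ≤ d - s then 2 else if j < s then 1 else 0

/-- The O-sequence `(1, d-1)`. -/
def twoSeq (d : ℕ) : ℕ → ℕ := fun j => if j = 0 then 1 else if j = 1 then d - 1 else 0

/-- The operation `h ↦ h - e_{s-1} + e_1` on a sequence of length `s`. -/
def downUp (h : ℕ → ℕ) (s : ℕ) : ℕ → ℕ :=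
  fun j => if j = s - 1 then h j - 1 else if j = 1 then h j + 1 else h j

/-- The largest index `1 ≤ j ≤ s-1` with `h j > 1` (and `0` if there is none). -/
def topIdx (h : ℕ → ℕ) (s : ℕ) : ℕ := Nat.findGreatest (fun j => 1 < h j) (s - 1)

/-- The operation `h ↦ h - e_i + e_1` where `i = topIdx h s`. -/
def shiftDown (h : ℕ → ℕ) (s : ℕ) : ℕ → ℕ :=
  fun j => if j = topIdx h s then h j - 1 else if j = 1 then h j + 1 else h j

/-- Auxiliary list `[m_n, m_{n-1}, …, m_1]` for the recursively defined sequence `(m_d)`. -/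
def mListAux : ℕ → List ℕ
  | 0 => []
  | n+1 =>
    let prev := mListAux n
    let newVal :=
      if n = 0 then 0
      else
        (List.range' 2 (n - 1)).foldl
          (fun M k =>
            if Nat.choose k 2 - 1 ≤ M then max M (prev.getD (k - 1) 0 + Nat.choose k 2) else M)
          (prev.getD 0 0)
    newVal :: prev

/-- The sequence `(m_d)_{d ≥ 1}`: `m_1 = 0` and, for `d ≥ 2`, `m_d` is obtained from
`M := m_{d-1}` by running over `k = 2, …, d-1` and replacing `M` by
`max M (m_{d-k} + C(k,2))` whenever `C(k,2) - 1 ≤ M`. -/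
def mSeq (d : ℕ) : ℕ := (mListAux d).getD 0 0

lemma mac_zero (t : ℕ) : mac t 0 = 0 := by cases t <;> simp [mac]

lemma mac_one (t : ℕ) (ht : 1 ≤ t) : mac t 1 = 1 := by
  obtain ⟨u, rfl⟩ : ∃ u, t = u + 1 := ⟨t - 1, by omega⟩
  have hfg : Nat.findGreatest (fun n => Nat.choose n (u+1) ≤ 1) (1 + u + 1) = u + 1 := by
    rw [Nat.findGreatest_eq_iff]
    refine ⟨by omega, fun _ => by simp, fun n hn hn' hP => ?_⟩
    have : n = u + 2 := by omega
    subst this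
    simp [Nat.choose_succ_self_right] at hP
  simp only [mac, hfg]
  norm_num [mac_zero]

lemma mac_two (t : ℕ) (ht : 2 ≤ t) : mac t 2 = 2 := by
  obtain ⟨u, rfl⟩ : ∃ u, t = u + 2 := ⟨t - 2, by omega⟩
  have hfg : Nat.findGreatest (fun n => Nat.choose n (u+2) ≤ 2) (2 + (u+1) + 1) = u + 2 := by
    rw [Nat.findGreatest_eq_iff]
    refine ⟨by omega, fun _ => by simp, fun n hn hn' hP => ?_⟩
    have h3 : Nat.choose (u+3) (u+2) ≤ Nat.choose n (u+2) :=
      Nat.choose_le_choose _ (by omega)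
    rw [Nat.choose_succ_self_right] at h3
    omega
  show mac ((u+1)+1) 2 = 2
  rw [mac, if_neg (by omega), hfg, Nat.choose_self, Nat.choose_self,
    show 2 - 1 = 1 from rfl, mac_one (u+1) (by omega)]

lemma two_choose_two (n : ℕ) : 2 * Nat.choose n 2 = n * (n - 1) := by
  induction n with
  | zero => rfl
  | succ k ih =>
    rw [Nat.choose_succ_succ, Nat.choose_one_right, Nat.mul_add, ih]
    cases k with
    | zero => rfl
    | succ j =>
      show 2 * (j+1) + (j+1) * j = (j+2) * (j+1)
      ring

lemma sum_range_pred (n : ℕ) : ∑ j ∈ Finset.range n, (j - 1) = Nat.choose (n - 1) 2 := by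
  induction n with
  | zero => rfl
  | succ k ih =>
    rw [Finset.sum_range_succ, ih]
    cases k with
    | zero => rfl
    | succ j =>
      show Nat.choose j 2 + (j + 1 - 1) = Nat.choose (j+1) 2
      rw [Nat.choose_succ_succ', Nat.choose_one_right]
      simp only [show (1:ℕ)+1 = 2 from rfl, Nat.add_sub_cancel]
      omega

lemma sum_range_id_choose (n : ℕ) : ∑ j ∈ Finset.range n, j = Nat.choose n 2 := by
  induction n with
  | zero => rfl
  | succ k ih =>
    rw [Finset.sum_range_succ, ih, Nat.choose_succ_succ', Nat.choose_one_right]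
    simp only [show (1:ℕ)+1 = 2 from rfl]
    omega

lemma oseq_step_one (h : ℕ → ℕ) (s : ℕ) (hO : IsOSeq h s) (t : ℕ) (ht : 1 ≤ t)
    (hle : h t ≤ 1) : h (t + 1) ≤ 1 := by
  obtain ⟨hh0, hpos, hmac⟩ := hO
  rcases Nat.eq_zero_or_pos (h t) with h0 | h1
  · have hts : ¬ t < s := by have := hpos t; omega
    have : ¬ t + 1 < s := by omega
    have := hpos (t + 1); omega
  · have h1' : h t = 1 := by omega
    have hm := hmac t ht
    rw [h1', mac_one t ht] at hm
    omega

lemma oseq_step_two (h : ℕ → ℕ) (s : ℕ) (hO : IsOSeq h s) (t : ℕ) (ht : 2 ≤ t)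
    (hle : h t ≤ 2) : h (t + 1) ≤ 2 := by
  obtain ⟨hh0, hpos, hmac⟩ := hO
  rcases Nat.eq_zero_or_pos (h t) with h0 | h1
  · have hts : ¬ t < s := by have := hpos t; omega
    have : ¬ t + 1 < s := by omega
    have := hpos (t + 1); omega
  · have hm := hmac t (by omega)
    rcases (by omega : h t = 1 ∨ h t = 2) with h1' | h2'
    · rw [h1', mac_one t (by omega)] at hm; omega
    · rw [h2', mac_two t ht] at hm; omega

lemma oseq_le_one (h : ℕ → ℕ) (s : ℕ) (hO : IsOSeq h s) (t : ℕ) (ht : 1 ≤ t)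
    (hle : h t ≤ 1) : ∀ j, t ≤ j → h j ≤ 1 := by
  intro j hj
  induction j, hj using Nat.le_induction with
  | base => exact hle
  | succ n hn ih => exact oseq_step_one h s hO n (by omega) ih

lemma oseq_le_two (h : ℕ → ℕ) (s : ℕ) (hO : IsOSeq h s) (t : ℕ) (ht : 2 ≤ t)
    (hle : h t ≤ 2) : ∀ j, t ≤ j → h j ≤ 2 := by
  intro j hj
  induction j, hj using Nat.le_induction with
  | base => exact hle
  | succ n hn ih => exact oseq_step_two h s hO n (by omega) ih

lemma key_ineq (k s m E : ℕ) (hsE : s + E = k + 12) (hE : 5 ≤ E) (hm1 : 1 ≤ m)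
    (hms : m ≤ s - 1) (hmE : m ≤ E) :
    Nat.choose (s - 1) 2 + (Nat.choose m 2 + (m - 1) * (E - m)) ≤ Nat.choose (k + 7) 2 + 4 := by
  obtain ⟨b, rfl⟩ : ∃ b, s = b + 2 := ⟨s - 2, by omega⟩
  have hma : m ≤ b + 1 := by omega
  have hbe : 10 ≤ b + E := by omega
  obtain rfl : k = b + E - 10 := by omega
  rw [show b + 2 - 1 = b + 1 from by omega, show b + E - 10 + 7 = b + E - 3 from by omega]
  have c1 := two_choose_two (b + 1)
  have c2 := two_choose_two m
  have c3 := two_choose_two (b + E - 3)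
  rw [show b + 1 - 1 = b from by omega] at c1
  rw [show b + E - 3 - 1 = b + E - 4 from by omega] at c3
  rw [← @Nat.cast_le ℤ]
  push_cast [Nat.cast_sub hm1, Nat.cast_sub hmE]
  have c1' : 2 * (((b+1).choose 2 : ℤ)) = ((b:ℤ)+1) * b := by exact_mod_cast c1
  have c2' : 2 * ((m.choose 2 : ℤ)) = (m:ℤ) * ((m:ℤ) - 1) := by
    zify [hm1] at c2; exact c2
  have c3' : 2 * (((b + E - 3).choose 2 : ℤ)) = ((b:ℤ) + E - 3) * ((b:ℤ) + E - 4) := by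
    zify [show 3 ≤ b + E from by omega, show 4 ≤ b + E from by omega] at c3
    exact c3
  have hm1' : (1:ℤ) ≤ (m:ℤ) := by exact_mod_cast hm1
  have hmE' : (m:ℤ) ≤ (E:ℤ) := by exact_mod_cast hmE
  have hma' : (m:ℤ) ≤ (b:ℤ) + 1 := by exact_mod_cast hma
  have hE' : (5:ℤ) ≤ (E:ℤ) := by exact_mod_cast hE
  have hbe' : (10:ℤ) ≤ (b:ℤ) + E := by exact_mod_cast hbe
  nlinarith [mul_nonneg (show (0:ℤ) ≤ (b:ℤ) + 1 - m by omega) (show (0:ℤ) ≤ (E:ℤ) - 5 by omega),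
    sq_nonneg ((E:ℤ) - 5), sq_nonneg ((m:ℤ) - 5), c1', c2', c3']

/-- For every `d ≥ 12`, the integer `d(d-11)/2 + 20`, which equals
`g_{d-4}(d) - 1` where `g_s(d) = C(s-1,2) + C(d-s,2)`, is a gap in `R_d`. -/
theorem stmt14 (d : ℕ) (hd : 12 ≤ d) :
    d * (d - 11) / 2 + 20 = Nat.choose (d - 5) 2 + Nat.choose 4 2 - 1 ∧
    IsGap d (d * (d - 11) / 2 + 20) := by
  obtain ⟨k, rfl⟩ : ∃ k, d = k + 12 := ⟨d - 12, by omega⟩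
  have h11 : k + 12 - 11 = k + 1 := by omega
  have h5 : k + 12 - 5 = k + 7 := by omega
  have h1' : k + 12 - 1 = k + 11 := by omega
  have e1 : (k + 12) * (k + 1) + 30 = 2 * Nat.choose (k + 7) 2 := by
    rw [two_choose_two, show k + 7 - 1 = k + 6 from by omega]; ring
  have hval : (k + 12) * (k + 12 - 11) / 2 + 20 = Nat.choose (k + 7) 2 + 5 := by
    rw [h11]
    generalize hP : (k + 12) * (k + 1) = P at e1 ⊢
    omega
  have hC8 : Nat.choose (k + 8) 2 = Nat.choose (k + 7) 2 + (k + 7) := by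
    rw [Nat.choose_succ_succ', Nat.choose_one_right]
    simp only [show (1:ℕ) + 1 = 2 from rfl]
    omega
  refine ⟨?_, ?_, ?_⟩
  · rw [hval, h5, show Nat.choose 4 2 = 6 from rfl]
    omega
  · rw [hval, h1']
    have e2 : 2 * Nat.choose (k + 11) 2 = (k + 11) * (k + 10) := by
      rw [two_choose_two, show k + 11 - 1 = k + 10 from by omega]
    nlinarith [e1, e2]
  · intro h s hO hmult hgen
    rw [hval] at hgen
    obtain ⟨hh0, hpos, hmac⟩ := hO
    have hz : ∀ i, s ≤ i → h i = 0 := fun i hi => by have := hpos i; omega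
    have hp1 : ∀ i, i < s → 1 ≤ h i := fun i hi => (hpos i).mpr hi
    have hs1 : 1 ≤ s := by
      by_contra hc
      have : s = 0 := by omega
      subst this
      simp [mult] at hmult
    -- sum decompositions
    have hsum : ∀ j ∈ Finset.range s, h j = 1 + (h j - 1) := fun j hj => by
      have := hp1 j (Finset.mem_range.mp hj); omega
    have hE : s + (∑ j ∈ Finset.range s, (h j - 1)) = k + 12 := by
      rw [← hmult]
      unfold mult
      rw [Finset.sum_congr rfl hsum, Finset.sum_add_distrib, Finset.sum_const,
        Finset.card_range, smul_eq_mul, mul_one]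
    have hgenus : Nat.choose (s - 1) 2 + (∑ j ∈ Finset.range s, (j - 1) * (h j - 1))
        = Nat.choose (k + 7) 2 + 5 := by
      rw [← hgen]
      unfold genus
      rw [← sum_range_pred s, ← Finset.sum_add_distrib]
      apply Finset.sum_congr rfl
      intro j hj
      have hx := hp1 j (Finset.mem_range.mp hj)
      have key : (j - 1) * h j = (j - 1) * (h j - 1) + (j - 1) := by
        conv_lhs => rw [show h j = (h j - 1) + 1 from by omega]
        rw [Nat.mul_add, Nat.mul_one]
      omega
    set E := ∑ j ∈ Finset.range s, (h j - 1) with hEdef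
    set T := ∑ j ∈ Finset.range s, (j - 1) * (h j - 1) with hTdef
    -- Case s ≥ k + 9
    rcases le_or_gt (k + 9) s with hbig | hsmall
    · have hmono : Nat.choose (k + 8) 2 ≤ Nat.choose (s - 1) 2 :=
        Nat.choose_le_choose 2 (by omega)
      omega
    -- now s ≤ k + 8, E ≥ 4
    have hE4 : 4 ≤ E := by omega
    have hs2 : 2 ≤ s := by
      by_contra hc
      have : s = 1 := by omega
      subst this
      rw [hEdef] at hE4
      simp [Finset.sum_range_one, hh0] at hE4
    have hOS : IsOSeq h s := ⟨hh0, hpos, hmac⟩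
    have h1ge : 2 ≤ h 1 := by
      by_contra hc
      push_neg at hc
      have hall := oseq_le_one h s hOS 1 le_rfl (by omega)
      have : E = 0 := by
        rw [hEdef]
        apply Finset.sum_eq_zero
        intro j hj
        rcases Nat.eq_zero_or_pos j with rfl | hj1
        · simp [hh0]
        · have := hall j hj1; omega
      omega
    -- the top index m
    set m := Nat.findGreatest (fun j => 1 < h j) (s - 1) with hmdef
    have hm_le : m ≤ s - 1 := Nat.findGreatest_le _
    have hm_ge : 1 ≤ m := Nat.le_findGreatest (by omega) (by omega)
    have hm_gt : ∀ j, m < j → h j ≤ 1 := by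
      intro j hj
      rcases le_or_gt j (s - 1) with hjs | hjs
      · by_contra hgt
        push_neg at hgt
        exact Nat.findGreatest_is_greatest hj hjs (by omega)
      · have := hz j (by omega); omega
    have hm_all : ∀ j, 1 ≤ j → j ≤ m → 2 ≤ h j := by
      intro j hj1 hjm
      by_contra hc
      push_neg at hc
      have hspec : 1 < h m := Nat.findGreatest_spec (P := fun j => 1 < h j) (by omega : 1 ≤ s - 1) (by omega : 1 < h 1)
      have := oseq_le_one h s hOS j hj1 (by omega) m hjm
      omega
    have hmlts : m + 1 ≤ s := by omega
    have hEsh : E = ∑ j ∈ Finset.range m, (h (j + 1) - 1) := by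
      rw [hEdef, ← Finset.sum_subset (Finset.range_subset_range.mpr hmlts)
        (fun x hx hnx => by
          have : m < x := by simp only [Finset.mem_range] at hnx; omega
          have := hm_gt x this; omega),
        Finset.sum_range_succ']
      simp [hh0]
    have hTsh : T = ∑ j ∈ Finset.range m, j * (h (j + 1) - 1) := by
      rw [hTdef, ← Finset.sum_subset (Finset.range_subset_range.mpr hmlts)
        (fun x hx hnx => by
          have hlt : m < x := by simp only [Finset.mem_range] at hnx; omega
          have hle := hm_gt x hlt
          have hz' : h x - 1 = 0 := by omega
          rw [hz', Nat.mul_zero]),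
        Finset.sum_range_succ']
      simp
    have hmE : m ≤ E := by
      rw [hEsh]
      calc m = ∑ _j ∈ Finset.range m, 1 := by simp
      _ ≤ _ := Finset.sum_le_sum fun j hj => by
          have := hm_all (j + 1) (by omega) (by simp only [Finset.mem_range] at hj; omega)
          omega
    clear_value m E T
    rcases (by omega : E = 4 ∨ 5 ≤ E) with hEeq | hE5
    · -- E = 4, s = k + 8
      have hskey : s - 1 = k + 7 := by omega
      rw [hskey] at hgenus
      have hT5 : T = 5 := by omega
      have mc23 : h 3 ≤ 2 ∨ 3 ≤ h 2 := by
        rcases le_or_gt (h 2) 2 with hx | hx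
        · exact Or.inl (oseq_step_two h s hOS 2 le_rfl hx)
        · exact Or.inr hx
      have mc34 : h 4 ≤ 2 ∨ 3 ≤ h 3 := by
        rcases le_or_gt (h 3) 2 with hx | hx
        · exact Or.inl (oseq_step_two h s hOS 3 (by omega) hx)
        · exact Or.inr hx
      have hm4 : m ≤ 4 := by omega
      have hv1 : 2 ≤ h 1 := h1ge
      interval_cases m
      · simp [Finset.sum_range_one] at hTsh
        omega
      · simp [Finset.sum_range_succ, Finset.sum_range_one] at hTsh hEsh
        omega
      · have h2 := hm_all 2 (by omega) (by omega)
        have h3 := hm_all 3 (by omega) (by omega)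
        simp [Finset.sum_range_succ, Finset.sum_range_one] at hTsh hEsh
        omega
      · have h2 := hm_all 2 (by omega) (by omega)
        have h3 := hm_all 3 (by omega) (by omega)
        have h4 := hm_all 4 (by omega) (by omega)
        simp [Finset.sum_range_succ, Finset.sum_range_one] at hTsh hEsh
        omega
    · -- E ≥ 5
      have hTbound : T ≤ Nat.choose m 2 + (m - 1) * (E - m) := by
        have hEm : (∑ j ∈ Finset.range m, (h (j + 1) - 2)) + m = E := by
          have hper : ∀ j ∈ Finset.range m, h (j + 1) - 1 = (h (j + 1) - 2) + 1 := by
            intro j hj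
            have := hm_all (j + 1) (by omega) (by simp only [Finset.mem_range] at hj; omega)
            omega
          rw [hEsh, Finset.sum_congr rfl hper, Finset.sum_add_distrib, Finset.sum_const,
            Finset.card_range, smul_eq_mul, mul_one]
        rw [hTsh]
        calc ∑ j ∈ Finset.range m, j * (h (j + 1) - 1)
            ≤ ∑ j ∈ Finset.range m, (j + (m - 1) * (h (j + 1) - 2)) := by
              apply Finset.sum_le_sum
              intro j hj
              have h2 := hm_all (j + 1) (by omega) (by simp only [Finset.mem_range] at hj; omega)
              have hjm : j ≤ m - 1 := by simp only [Finset.mem_range] at hj; omega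
              have hmul : j * (h (j + 1) - 2) ≤ (m - 1) * (h (j + 1) - 2) :=
                Nat.mul_le_mul_right _ hjm
              have hexp : j * (h (j + 1) - 1) = j * (h (j + 1) - 2) + j := by
                rw [show h (j + 1) - 1 = (h (j + 1) - 2) + 1 from by omega]
                ring
              omega
          _ = Nat.choose m 2 + (m - 1) * (E - m) := by
              rw [Finset.sum_add_distrib, sum_range_id_choose, ← Finset.mul_sum,
                show (∑ j ∈ Finset.range m, (h (j + 1) - 2)) = E - m from by omega]
      have := key_ineq k s m E (by omega) hE5 hm_ge hm_le hmE
      omega
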